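/- Assume (A2). Let M be a menu with M ⊆ M_NR. Then M_NSR ⊆ M. -/

import Mathlib

open Finset

noncomputable section

/-- The product CSP `x ⊗ y`. -/
def prodCSP {m n : ℕ} (x : Fin m → ℝ) (y : Fin n → ℝ) : Fin m × Fin n → ℝ :=
  fun p => x p.1 * y p.2

/-- The `j`-th vertex `e_j` of a simplex. -/
def pureVec {k : ℕ} (j : Fin k) : Fin k → ℝ := fun j' => if j' = j then 1 else 0

/-- Linear extension of a payoff to CSPs. -/
def linCSP {m n : ℕ} (u : Fin m → Fin n → ℝ) (φ : Fin m × Fin n → ℝ) : ℝ :=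
  ∑ p : Fin m × Fin n, φ p * u p.1 p.2

/-- Payoff the learner would get by always deviating to the pure action `j'`. -/
def devCSP {m n : ℕ} (u : Fin m → Fin n → ℝ) (φ : Fin m × Fin n → ℝ) (j' : Fin n) : ℝ :=
  ∑ p : Fin m × Fin n, φ p * u p.1 j'

/-- Bilinear extension of a payoff to mixed strategies. -/
def mixPay {m n : ℕ} (u : Fin m → Fin n → ℝ) (x : Fin m → ℝ) (y : Fin n → ℝ) : ℝ :=
  ∑ i, ∑ j, x i * y j * u i j

/-- Pure best responses of the learner to the optimizer mixed strategy `x`. -/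
def BRL {m n : ℕ} (u : Fin m → Fin n → ℝ) (x : Fin m → ℝ) : Set (Fin n) :=
  {j | ∀ j' : Fin n, (∑ i, x i * u i j') ≤ ∑ i, x i * u i j}

/-- A CSP is no-regret. -/
def NoRegret {m n : ℕ} (u : Fin m → Fin n → ℝ) (φ : Fin m × Fin n → ℝ) : Prop :=
  ∀ j' : Fin n, devCSP u φ j' ≤ linCSP u φ

/-- A CSP is no-swap-regret. -/
def NoSwapRegret {m n : ℕ} (u : Fin m → Fin n → ℝ) (φ : Fin m × Fin n → ℝ) : Prop :=
  ∀ j j' : Fin n, (∑ i, φ (i, j) * u i j') ≤ ∑ i, φ (i, j) * u i j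

/-- The no-regret menu: all no-regret CSPs. -/
def MNR {m n : ℕ} (u : Fin m → Fin n → ℝ) : Set (Fin m × Fin n → ℝ) :=
  {φ | φ ∈ stdSimplex ℝ (Fin m × Fin n) ∧ NoRegret u φ}

/-- The no-swap-regret menu: all no-swap-regret CSPs. -/
def MNSR {m n : ℕ} (u : Fin m → Fin n → ℝ) : Set (Fin m × Fin n → ℝ) :=
  {φ | φ ∈ stdSimplex ℝ (Fin m × Fin n) ∧ NoSwapRegret u φ}

/-- A menu: a closed convex subset of the simplex of CSPs such that every optimizer
mixed strategy has some product response inside the set. -/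
def IsMenu {m n : ℕ} (M : Set (Fin m × Fin n → ℝ)) : Prop :=
  IsClosed M ∧ Convex ℝ M ∧ M ⊆ stdSimplex ℝ (Fin m × Fin n) ∧
    ∀ x ∈ stdSimplex ℝ (Fin m), ∃ y ∈ stdSimplex ℝ (Fin n), prodCSP x y ∈ M

/-- The learner's value when the optimizer with payoff `uO` picks their favorite point
of the menu `M`, breaking ties in the learner's favor. -/
def VL {m n : ℕ} (uL uO : Fin m → Fin n → ℝ) (M : Set (Fin m × Fin n → ℝ)) : ℝ :=
  sSup (linCSP uL '' {φ ∈ M | ∀ ψ ∈ M, linCSP uO ψ ≤ linCSP uO φ})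

/-- `M'` Pareto-dominates `M` (for the learner payoff `uL`). -/
def ParetoDominates {m n : ℕ} (uL : Fin m → Fin n → ℝ)
    (M' M : Set (Fin m × Fin n → ℝ)) : Prop :=
  (∀ uO : Fin m → Fin n → ℝ, VL uL uO M ≤ VL uL uO M') ∧
    ∃ uO : Fin m → Fin n → ℝ, VL uL uO M < VL uL uO M'

/-- A menu is Pareto-optimal if it is a menu and no menu Pareto-dominates it. -/
def ParetoOptimal {m n : ℕ} (uL : Fin m → Fin n → ℝ) (M : Set (Fin m × Fin n → ℝ)) : Prop :=
  IsMenu M ∧ ∀ M' : Set (Fin m × Fin n → ℝ), IsMenu M' → ¬ ParetoDominates uL M' M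

/-- (A2): no weakly dominated learner actions. -/
def A2cond {m n : ℕ} (u : Fin m → Fin n → ℝ) : Prop :=
  ∀ j : Fin n, (∃ x ∈ stdSimplex ℝ (Fin m), j ∈ BRL u x) →
    ∃ x' ∈ stdSimplex ℝ (Fin m), BRL u x' = {j}

/-- `U^-(M)`: the minimal learner utility over `M`. -/
def UminusVal {m n : ℕ} (u : Fin m → Fin n → ℝ) (M : Set (Fin m × Fin n → ℝ)) : ℝ :=
  sInf (linCSP u '' M)

/-- `U^+(M)`: the maximal learner utility over `M`. -/
def UplusVal {m n : ℕ} (u : Fin m → Fin n → ℝ) (M : Set (Fin m × Fin n → ℝ)) : ℝ :=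
  sSup (linCSP u '' M)

/-- `M^-`: the set of learner-utility-minimizing points of `M`. -/
def MminusSet {m n : ℕ} (u : Fin m → Fin n → ℝ) (M : Set (Fin m × Fin n → ℝ)) :
    Set (Fin m × Fin n → ℝ) :=
  {φ ∈ M | linCSP u φ = UminusVal u M}

/-- `M^+`: the set of learner-utility-maximizing points of `M`. -/
def MplusSet {m n : ℕ} (u : Fin m → Fin n → ℝ) (M : Set (Fin m × Fin n → ℝ)) :
    Set (Fin m × Fin n → ℝ) :=
  {φ ∈ M | linCSP u φ = UplusVal u M}

/-- The zero-sum value `U_ZS = min_x max_y u_L(x,y)`. -/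
def UZSval {m n : ℕ} (u : Fin m → Fin n → ℝ) : ℝ :=
  sInf ((fun x => sSup ((fun y => mixPay u x y) '' stdSimplex ℝ (Fin n))) ''
    stdSimplex ℝ (Fin m))


section Aux

variable {m n : ℕ}

lemma strictBR (u : Fin m → Fin n → ℝ) {x' : Fin m → ℝ} {j : Fin n}
    (h : BRL u x' = {j}) :
    ∀ j' : Fin n, j' ≠ j → (∑ i, x' i * u i j') < ∑ i, x' i * u i j := by
  intro j' hj'
  have hjBR : j ∈ BRL u x' := by rw [h]; rfl
  have hnot : j' ∉ BRL u x' := by rw [h]; simpa using hj'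
  simp only [BRL, Set.mem_setOf_eq, not_forall, not_le] at hnot
  obtain ⟨j'', hj''⟩ := hnot
  exact lt_of_lt_of_le hj'' (hjBR j'')

lemma linCSP_prod (u : Fin m → Fin n → ℝ) (x : Fin m → ℝ) (y : Fin n → ℝ) :
    linCSP u (prodCSP x y) = ∑ j', y j' * ∑ i, x i * u i j' := by
  simp only [linCSP, prodCSP, Fintype.sum_prod_type]
  rw [Finset.sum_comm]
  refine Finset.sum_congr rfl fun j' _ => ?_
  rw [Finset.mul_sum]
  exact Finset.sum_congr rfl fun i _ => by ring

lemma devCSP_prod (u : Fin m → Fin n → ℝ) (x : Fin m → ℝ) {y : Fin n → ℝ}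
    (hy : ∑ j', y j' = 1) (j' : Fin n) :
    devCSP u (prodCSP x y) j' = ∑ i, x i * u i j' := by
  simp only [devCSP, prodCSP, Fintype.sum_prod_type]
  have : ∀ i : Fin m, ∑ j'', x i * y j'' * u i j' = x i * u i j' := by
    intro i
    have : ∑ j'', x i * y j'' * u i j' = (x i * u i j') * ∑ j'', y j'' := by
      rw [Finset.mul_sum]
      exact Finset.sum_congr rfl fun j'' _ => by ring
    rw [this, hy, mul_one]
  exact Finset.sum_congr rfl fun i _ => this i

/-- Key lemma: pure products with best-response column are in any menu contained
in the no-regret menu. -/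
lemma prod_pure_mem (u : Fin m → Fin n → ℝ) (hA2 : A2cond u)
    (M : Set (Fin m × Fin n → ℝ)) (hM : IsMenu M) (hsub : M ⊆ MNR u)
    {x : Fin m → ℝ} (hx : x ∈ stdSimplex ℝ (Fin m)) {j : Fin n}
    (hj : j ∈ BRL u x) : prodCSP x (pureVec j) ∈ M := by
  obtain ⟨x', hx', hx'BR⟩ := hA2 j ⟨x, hx, hj⟩
  set t : ℕ → ℝ := fun k => 1 / (k + 1) with ht_def
  have ht0 : ∀ k, 0 < t k := fun k => by positivity
  have ht1 : ∀ k, t k ≤ 1 := by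
    intro k
    rw [ht_def]
    rw [div_le_one (by positivity)]
    have : (0:ℝ) ≤ (k:ℝ) := Nat.cast_nonneg k
    linarith
  set xk : ℕ → Fin m → ℝ := fun k i => (1 - t k) * x i + t k * x' i with hxk_def
  have hxk_simplex : ∀ k, xk k ∈ stdSimplex ℝ (Fin m) := by
    intro k
    constructor
    · intro i
      have h1 : 0 ≤ (1 - t k) * x i := mul_nonneg (by linarith [ht1 k]) (hx.1 i)
      have h2 : 0 ≤ t k * x' i := mul_nonneg (le_of_lt (ht0 k)) (hx'.1 i)
      simpa [hxk_def] using add_nonneg h1 h2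
    · have : ∑ i, ((1 - t k) * x i + t k * x' i)
          = (1 - t k) * ∑ i, x i + t k * ∑ i, x' i := by
        rw [Finset.sum_add_distrib, Finset.mul_sum, Finset.mul_sum]
      simp only [hxk_def]
      rw [this, hx.2, hx'.2]; ring
  -- strict best response of j at xk k
  have hsplit : ∀ k (jj : Fin n), ∑ i, xk k i * u i jj
      = (1 - t k) * (∑ i, x i * u i jj) + t k * (∑ i, x' i * u i jj) := by
    intro k jj
    simp only [hxk_def]
    rw [Finset.mul_sum, Finset.mul_sum, ← Finset.sum_add_distrib]
    exact Finset.sum_congr rfl fun i _ => by ring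
  have hstrict : ∀ k (j' : Fin n), j' ≠ j →
      (∑ i, xk k i * u i j') < ∑ i, xk k i * u i j := by
    intro k j' hj'
    rw [hsplit, hsplit]
    have h1 : (1 - t k) * (∑ i, x i * u i j') ≤ (1 - t k) * (∑ i, x i * u i j) :=
      mul_le_mul_of_nonneg_left (hj j') (by linarith [ht1 k])
    have h2 : t k * (∑ i, x' i * u i j') < t k * (∑ i, x' i * u i j) :=
      mul_lt_mul_of_pos_left (strictBR u hx'BR j' hj') (ht0 k)
    linarith
  -- for each k, x_k ⊗ e_j ∈ M
  have hmem : ∀ k, prodCSP (xk k) (pureVec j) ∈ M := by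
    intro k
    obtain ⟨y, hy, hyM⟩ := hM.2.2.2 (xk k) (hxk_simplex k)
    have hNR : NoRegret u (prodCSP (xk k) y) := (hsub hyM).2
    have hkey := hNR j
    rw [devCSP_prod u (xk k) hy.2 j, linCSP_prod u (xk k) y] at hkey
    -- all mass of y on j
    have hy0 : ∀ j'' : Fin n, j'' ≠ j → y j'' = 0 := by
      intro j0 hj0
      by_contra hne
      have hpos : 0 < y j0 := lt_of_le_of_ne (hy.1 j0) (Ne.symm hne)
      have hlt : ∑ j'', y j'' * ∑ i, xk k i * u i j''
          < ∑ j'', y j'' * ∑ i, xk k i * u i j := by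
        apply Finset.sum_lt_sum
        · intro j'' _
          rcases eq_or_ne j'' j with h | h
          · rw [h]
          · exact mul_le_mul_of_nonneg_left (le_of_lt (hstrict k j'' h)) (hy.1 j'')
        · exact ⟨j0, Finset.mem_univ j0,
            mul_lt_mul_of_pos_left (hstrict k j0 hj0) hpos⟩
      have heq : ∑ j'', y j'' * ∑ i, xk k i * u i j
          = ∑ i, xk k i * u i j := by
        rw [← Finset.sum_mul, hy.2, one_mul]
      rw [heq] at hlt
      linarith
    have hyj : y = pureVec j := by
      funext j''
      rcases eq_or_ne j'' j with h | h
      · have : ∑ j', y j' = y j := Finset.sum_eq_single j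
          (fun b _ hb => hy0 b hb) (fun hb => absurd (Finset.mem_univ j) hb)
        rw [h, pureVec, if_pos rfl, ← this, hy.2]
      · rw [hy0 j'' h, pureVec, if_neg h]
    rwa [hyj] at hyM
  -- take the limit k → ∞
  have htend : Filter.Tendsto (fun k => prodCSP (xk k) (pureVec j))
      Filter.atTop (nhds (prodCSP x (pureVec j))) := by
    rw [tendsto_pi_nhds]
    intro p
    have htt : Filter.Tendsto t Filter.atTop (nhds 0) := by
      simpa [ht_def] using (tendsto_one_div_add_atTop_nhds_zero_nat :
        Filter.Tendsto (fun n : ℕ => 1 / ((n : ℝ) + 1)) Filter.atTop (nhds 0))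
    have h1 : Filter.Tendsto (fun k => xk k p.1) Filter.atTop (nhds (x p.1)) := by
      have : Filter.Tendsto (fun k => (1 - t k) * x p.1 + t k * x' p.1)
          Filter.atTop (nhds ((1 - 0) * x p.1 + 0 * x' p.1)) := by
        exact (((tendsto_const_nhds.sub htt).mul tendsto_const_nhds).add
          (htt.mul tendsto_const_nhds))
      simpa [hxk_def] using this
    simpa [prodCSP] using h1.mul (tendsto_const_nhds :
      Filter.Tendsto (fun _ : ℕ => pureVec j p.2) Filter.atTop (nhds (pureVec j p.2)))
  exact hM.1.mem_of_tendsto htend (Filter.Eventually.of_forall hmem)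

end Aux

/-- Assume (A2). Any menu contained in the no-regret menu contains the
no-swap-regret menu. -/
theorem nsr_menu_subset_of_no_regret_menu
    (m n : ℕ) (hm : 0 < m) (hn : 0 < n)
    (uL : Fin m → Fin n → ℝ) (hbound : ∀ i j, uL i j ∈ Set.Icc (-1 : ℝ) 1)
    (hA2 : A2cond uL)
    (M : Set (Fin m × Fin n → ℝ)) (hM : IsMenu M) (hsub : M ⊆ MNR uL) :
    MNSR uL ⊆ M := by
  intro φ hφ
  obtain ⟨hφs, hφnsr⟩ := hφ
  -- a default point of M
  obtain ⟨y0, hy0, hz0⟩ := hM.2.2.2 (pureVec ⟨0, hm⟩) (by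
    constructor
    · intro i; simp only [pureVec]; split <;> norm_num
    · simp [pureVec])
  set z0 : Fin m × Fin n → ℝ := prodCSP (pureVec ⟨0, hm⟩) y0 with hz0_def
  set p : Fin n → ℝ := fun j => ∑ i, φ (i, j) with hp_def
  have hpnn : ∀ j, 0 ≤ p j := fun j =>
    Finset.sum_nonneg fun i _ => hφs.1 (i, j)
  have hpsum : ∑ j, p j = 1 := by
    have := hφs.2
    rw [Fintype.sum_prod_type] at this
    rw [hp_def, Finset.sum_comm]
    exact this
  set xj : Fin n → Fin m → ℝ := fun j i => φ (i, j) / p j with hxj_def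
  set z : Fin n → (Fin m × Fin n → ℝ) := fun j =>
    if p j = 0 then z0 else prodCSP (xj j) (pureVec j) with hz_def
  have hzM : ∀ j, z j ∈ M := by
    intro j
    rw [hz_def]
    by_cases hpj : p j = 0
    · simp only [if_pos hpj]; exact hz0
    · simp only [if_neg hpj]
      have hppos : 0 < p j := lt_of_le_of_ne (hpnn j) (Ne.symm hpj)
      have hxjs : xj j ∈ stdSimplex ℝ (Fin m) := by
        constructor
        · intro i; exact div_nonneg (hφs.1 (i, j)) (hpnn j)
        · rw [hxj_def]
          simp only
          rw [← Finset.sum_div]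
          exact div_self hpj
      have hjBR : j ∈ BRL uL (xj j) := by
        intro j'
        have h1 : ∀ jj : Fin n, ∑ i, xj j i * uL i jj
            = (∑ i, φ (i, j) * uL i jj) / p j := by
          intro jj
          rw [Finset.sum_div]
          exact Finset.sum_congr rfl fun i _ => by
            rw [hxj_def]; simp only; rw [div_mul_eq_mul_div]
        rw [h1, h1]
        exact div_le_div_of_nonneg_right (hφnsr j j') (hpnn j)
      exact prod_pure_mem uL hA2 M hM hsub hxjs hjBR
  have hdecomp : φ = ∑ j, p j • z j := by
    funext q
    obtain ⟨i, j0⟩ := q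
    rw [Finset.sum_apply]
    simp only [Pi.smul_apply, smul_eq_mul]
    have hterm : ∀ j : Fin n, j ≠ j0 → p j * z j (i, j0) = 0 := by
      intro j hj
      rw [hz_def]
      by_cases h : p j = 0
      · simp only [if_pos h]; rw [h, zero_mul]
      · simp only [if_neg h, prodCSP, pureVec]
        rw [if_neg hj.symm]
        ring
    rw [Finset.sum_eq_single j0 (fun b _ hb => hterm b hb)
      (fun hb => absurd (Finset.mem_univ j0) hb)]
    rcases eq_or_ne (p j0) 0 with h | h
    · have hzero : φ (i, j0) = 0 := by
        have := (Finset.sum_eq_zero_iff_of_nonneg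
          (fun i' _ => hφs.1 (i', j0))).mp h i (Finset.mem_univ i)
        exact this
      rw [hzero, h, zero_mul]
    · rw [hz_def]
      simp only [if_neg h, prodCSP, pureVec, if_pos rfl, hxj_def]
      field_simp
      simp
  rw [hdecomp]
  exact hM.2.1.sum_mem (fun j _ => hpnn j) hpsum (fun j _ => hzM j)
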